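/- Under the measure P_{α,r} with j < r, the expected number of complete subsets A of size j such that after bumping all of A the resulting word has no zeros equals e^{-α} α^j. Equivalently, the expected number of subsets A = {a_1 < ... < a_j} ⊆ {1,...,n} (with a_0 = 0, a_{j+1} = n+1) such that A is complete and for all 0 ≤ i ≤ j, no index b in (a_i, a_{i+1}) satisfies W_b = j - i, equals e^{-α} α^j. -/

import Mathlib

/-- The probability of each fixed word of length `n` over `{0,...,r-1}` under the
measure where the length is `Poisson(αr)` and letters are i.i.d. uniform. -/
noncomputable def wordProb (α : ℝ) (r n : ℕ) : ℝ :=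
  (Real.exp (-(α * r)) * (α * r) ^ n / Nat.factorial n) * (1 / r) ^ n

/-- The number of subsets `A = {a_1 < ... < a_j}` of `{1,...,n}` (given as strictly
monotone maps `Fin j → Fin n`) such that `A` is complete in `w`
(`w_{a_i} ≤ j - i` for all `i`, zero-indexed below) and, after bumping all of `A`,
the resulting word has no zeros: no index `b` with exactly `i` elements of `A`
below it satisfies `w_b = j - i`. -/
def leafCount (r n j : ℕ) (w : Fin n → Fin r) : ℕ :=
  (Finset.univ.filter (fun A : Fin j → Fin n =>
    StrictMono A ∧ (∀ i : Fin j, (w (A i) : ℕ) ≤ j - (i : ℕ) - 1) ∧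
      ∀ b : Fin n, (∀ i : Fin j, A i ≠ b) →
        (w b : ℕ) ≠ j - (Finset.univ.filter (fun i : Fin j => A i < b)).card)).card


lemma card_strictMono_filter (j n : ℕ) :
    ((Finset.univ : Finset (Fin j → Fin n)).filter (fun A => StrictMono A)).card
      = n.choose j := by
  have hp : ((Finset.univ : Finset (Fin n)).powersetCard j).card = n.choose j := by
    simp [Finset.card_powersetCard]
  rw [← hp]
  apply Finset.card_bij (fun A _ => Finset.image A Finset.univ)
  · intro A hA
    simp only [Finset.mem_filter, Finset.mem_univ, true_and] at hA
    simp only [Finset.mem_powersetCard]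
    exact ⟨Finset.subset_univ _,
      by rw [Finset.card_image_of_injective _ hA.injective, Finset.card_univ,
        Fintype.card_fin]⟩
  · intro A hA A' hA' h
    simp only [Finset.mem_filter, Finset.mem_univ, true_and] at hA hA'
    have hc : (Finset.image A Finset.univ).card = j := by
      rw [Finset.card_image_of_injective _ hA.injective, Finset.card_univ, Fintype.card_fin]
    have e1 := Finset.orderEmbOfFin_unique hc
      (fun x => Finset.mem_image_of_mem _ (Finset.mem_univ x)) hA
    have e2 := Finset.orderEmbOfFin_unique hc
      (fun x => h ▸ Finset.mem_image_of_mem A' (Finset.mem_univ x)) hA'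
    rw [e2]; exact e1
  · intro s hs
    simp only [Finset.mem_powersetCard] at hs
    refine ⟨s.orderEmbOfFin hs.2, by
      simp only [Finset.mem_filter, Finset.mem_univ, true_and]
      exact (s.orderEmbOfFin hs.2).strictMono, ?_⟩
    have := Finset.range_orderEmbOfFin s hs.2
    rw [← Finset.coe_inj, Finset.coe_image, Finset.coe_univ, Set.image_univ, this]

lemma card_le_filter (r k : ℕ) (hk : k < r) :
    (Finset.univ.filter (fun v : Fin r => (v : ℕ) ≤ k)).card = k + 1 := by
  have : Finset.univ.filter (fun v : Fin r => (v : ℕ) ≤ k)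
      = Finset.Iic (⟨k, hk⟩ : Fin r) := by
    ext v; simp [Fin.le_def]
  rw [this, Fin.card_Iic]

lemma card_ne_filter (r m : ℕ) (hm : m < r) :
    (Finset.univ.filter (fun v : Fin r => (v : ℕ) ≠ m)).card = r - 1 := by
  have : Finset.univ.filter (fun v : Fin r => (v : ℕ) ≠ m)
      = Finset.univ.erase (⟨m, hm⟩ : Fin r) := by
    ext v; simp [Fin.ext_iff]
  rw [this, Finset.card_erase_of_mem (Finset.mem_univ _), Finset.card_univ, Fintype.card_fin]

lemma prod_sub_eq_factorial (j : ℕ) : ∏ i : Fin j, (j - (i : ℕ)) = Nat.factorial j := by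
  rw [Fin.prod_univ_eq_prod_range (fun i => j - i) j]
  rw [← Finset.prod_range_add_one_eq_factorial j, ← Finset.prod_range_reflect (fun i => i + 1) j]
  apply Finset.prod_congr rfl
  intro i hi
  rw [Finset.mem_range] at hi
  omega

lemma count_w (r n j : ℕ) (hjr : j < r) (A : Fin j → Fin n) (hA : StrictMono A) :
    ((Finset.univ : Finset (Fin n → Fin r)).filter (fun w =>
      (∀ i : Fin j, (w (A i) : ℕ) ≤ j - (i : ℕ) - 1) ∧
      ∀ b : Fin n, (∀ i : Fin j, A i ≠ b) →
        (w b : ℕ) ≠ j - (Finset.univ.filter (fun i : Fin j => A i < b)).card)).card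
    = Nat.factorial j * (r - 1) ^ (n - j) := by
  classical
  set c : Fin n → ℕ := fun b => (Finset.univ.filter (fun i : Fin j => A i < b)).card with hc
  have hcA : ∀ i : Fin j, c (A i) = (i : ℕ) := by
    intro i
    have : (Finset.univ.filter (fun i' : Fin j => A i' < A i)) = Finset.Iio i := by
      ext i'; simp [hA.lt_iff_lt]
    simp only [hc, this, Fin.card_Iio]
  set S : Fin n → Finset (Fin r) := fun b =>
    if ∃ i, A i = b then Finset.univ.filter (fun v => (v : ℕ) ≤ j - c b - 1)
    else Finset.univ.filter (fun v => (v : ℕ) ≠ j - c b) with hS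
  have hfilter : (Finset.univ : Finset (Fin n → Fin r)).filter (fun w =>
      (∀ i : Fin j, (w (A i) : ℕ) ≤ j - (i : ℕ) - 1) ∧
      ∀ b : Fin n, (∀ i : Fin j, A i ≠ b) →
        (w b : ℕ) ≠ j - (Finset.univ.filter (fun i : Fin j => A i < b)).card)
      = Fintype.piFinset S := by
    ext w
    simp only [Finset.mem_filter, Finset.mem_univ, true_and, Fintype.mem_piFinset]
    constructor
    · rintro ⟨h1, h2⟩ b
      by_cases h : ∃ i, A i = b
      · obtain ⟨i, rfl⟩ := h
        have hex : ∃ i', A i' = A i := ⟨i, rfl⟩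
        simp only [hS]
        rw [if_pos hex]
        simp only [Finset.mem_filter, Finset.mem_univ, true_and, hcA i]
        exact h1 i
      · simp only [hS]
        rw [if_neg h]
        simp only [Finset.mem_filter, Finset.mem_univ, true_and]
        exact h2 b (fun i hi => h ⟨i, hi⟩)
    · intro h
      constructor
      · intro i
        have hex : ∃ i', A i' = A i := ⟨i, rfl⟩
        have := h (A i)
        rw [hS] at this
        simp only at this
        rw [if_pos hex] at this
        simp only [Finset.mem_filter, Finset.mem_univ, true_and, hcA i] at this
        exact this
      · intro b hb
        have hex : ¬∃ i, A i = b := fun ⟨i, hi⟩ => hb i hi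
        have := h b
        rw [hS] at this
        simp only at this
        rw [if_neg hex] at this
        simp only [Finset.mem_filter, Finset.mem_univ, true_and] at this
        exact this
  rw [hfilter, Fintype.card_piFinset]
  set T := Finset.image A Finset.univ with hT
  have hTcard : T.card = j := by
    rw [hT, Finset.card_image_of_injective _ hA.injective, Finset.card_univ, Fintype.card_fin]
  rw [← Finset.prod_mul_prod_compl T (fun b => (S b).card)]
  have h1 : ∏ b ∈ T, (S b).card = Nat.factorial j := by
    rw [hT, Finset.prod_image (fun x _ y _ h => hA.injective h)]
    rw [← prod_sub_eq_factorial j]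
    apply Finset.prod_congr rfl
    intro i _
    have hex : ∃ i', A i' = A i := ⟨i, rfl⟩
    simp only [hS]
    rw [if_pos hex]
    simp only [hcA i]
    rw [card_le_filter r (j - (i : ℕ) - 1) (by omega)]
    have := i.isLt
    omega
  have h2 : ∏ b ∈ Tᶜ, (S b).card = (r - 1) ^ (n - j) := by
    rw [Finset.prod_congr rfl (fun b hb => ?_), Finset.prod_const, Finset.card_compl,
      hTcard, Fintype.card_fin]
    have hb' : ¬∃ i, A i = b := by
      rintro ⟨i, hi⟩
      exact (Finset.mem_compl.mp hb) (hi ▸ Finset.mem_image_of_mem A (Finset.mem_univ i))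
    simp only [hS]
    rw [if_neg hb']
    exact card_ne_filter r (j - c b) (by omega)
  rw [h1, h2]

lemma sum_leafCount (r n j : ℕ) (hjr : j < r) :
    ∑ w : Fin n → Fin r, leafCount r n j w
      = n.choose j * (Nat.factorial j * (r - 1) ^ (n - j)) := by
  classical
  unfold leafCount
  rw [Finset.sum_congr rfl (fun w _ => Finset.card_filter _ _)]
  rw [Finset.sum_comm]
  have key : ∀ A : Fin j → Fin n,
      (∑ w : Fin n → Fin r, if StrictMono A ∧ (∀ i : Fin j, (w (A i) : ℕ) ≤ j - (i : ℕ) - 1) ∧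
        ∀ b : Fin n, (∀ i : Fin j, A i ≠ b) →
          (w b : ℕ) ≠ j - (Finset.univ.filter (fun i : Fin j => A i < b)).card then 1 else 0)
      = if StrictMono A then Nat.factorial j * (r - 1) ^ (n - j) else 0 := by
    intro A
    by_cases hA : StrictMono A
    · rw [if_pos hA]
      simp only [hA, true_and]
      rw [← Finset.card_filter]
      exact count_w r n j hjr A hA
    · rw [if_neg hA]
      apply Finset.sum_eq_zero
      intro w _
      rw [if_neg (by tauto)]
  rw [Finset.sum_congr rfl (fun A _ => key A)]
  rw [Finset.sum_ite, Finset.sum_const, Finset.sum_const_zero, add_zero, smul_eq_mul,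
    card_strictMono_filter j n]

lemma key_tsum (α : ℝ) (hα : 0 < α) (r j : ℕ) (hjr : j < r) :
    ∑' n : ℕ, wordProb α r n * ((n.choose j * (Nat.factorial j * (r - 1) ^ (n - j)) : ℕ) : ℝ)
      = Real.exp (-α) * α ^ j := by
  have hr1 : 1 ≤ r := Nat.one_le_of_lt (Nat.lt_of_le_of_lt (Nat.zero_le j) hjr)
  have hrR : (0:ℝ) < r := by exact_mod_cast Nat.lt_of_lt_of_le Nat.zero_lt_one hr1
  set g : ℕ → ℝ := fun m => (Real.exp (-(α * r)) * α ^ j) * ((α * ((r:ℝ) - 1)) ^ m / m.factorial)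
    with hg
  have hinj : Function.Injective (fun m : ℕ => m + j) := fun a b h => by simpa using h
  have hsupp : Function.support
      (fun n => wordProb α r n * ((n.choose j * (Nat.factorial j * (r - 1) ^ (n - j)) : ℕ) : ℝ))
      ⊆ Set.range (fun m : ℕ => m + j) := by
    intro n hn
    simp only [Function.mem_support] at hn
    by_contra h
    have hnj : n < j := by
      simp only [Set.mem_range, not_exists] at h
      by_contra h'
      exact h (n - j) (by omega)
    exact hn (by rw [Nat.choose_eq_zero_of_lt hnj]; simp)
  rw [← Function.Injective.tsum_eq hinj hsupp]
  have hcomp : ∀ m : ℕ, wordProb α r (m + j) *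
      (((m + j).choose j * (Nat.factorial j * (r - 1) ^ ((m + j) - j)) : ℕ) : ℝ) = g m := by
    intro m
    have hkey : ((m + j).choose j : ℝ) * j.factorial * m.factorial = (m + j).factorial := by
      exact_mod_cast congrArg (Nat.cast : ℕ → ℝ)
        (by simpa using Nat.choose_mul_factorial_mul_factorial (Nat.le_add_left j m))
    have hC : ((m + j).choose j : ℝ) = (m + j).factorial / (j.factorial * m.factorial) := by
      field_simp at hkey ⊢
      linarith [hkey]
    have hsub : (m + j) - j = m := by omega
    rw [wordProb, hsub]
    push_cast [Nat.cast_sub hr1]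
    rw [hC, hg, mul_pow]
    have h1 : (m.factorial : ℝ) ≠ 0 := by positivity
    have h2 : (j.factorial : ℝ) ≠ 0 := by positivity
    have h3 : ((m + j).factorial : ℝ) ≠ 0 := by positivity
    field_simp
    rw [mul_pow]
    have hr0 : (r:ℝ)^m * (r:ℝ)⁻¹^m = 1 := by rw [← mul_pow, mul_inv_cancel₀ hrR.ne', one_pow]
    have hr0' : (r:ℝ)^j * (r:ℝ)⁻¹^j = 1 := by rw [← mul_pow, mul_inv_cancel₀ hrR.ne', one_pow]
    linear_combination (α^m*α^j*((r:ℝ)-1)^m*(r:ℝ)^j*(r:ℝ)⁻¹^j) * hr0 + (α^m*α^j*((r:ℝ)-1)^m) * hr0'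
  rw [tsum_congr hcomp, hg]
  rw [tsum_mul_left]
  have hexp : ∑' m : ℕ, (α * ((r:ℝ) - 1)) ^ m / m.factorial = Real.exp (α * ((r:ℝ) - 1)) := by
    rw [Real.exp_eq_exp_ℝ, NormedSpace.exp_eq_tsum_div]
  rw [hexp, mul_right_comm, ← Real.exp_add,
    show -(α * (r:ℝ)) + α * ((r:ℝ) - 1) = -α by ring]

/-- For `0 < α ≤ 1` and `j < r`, the expected number of complete subsets of size
`j` whose bumping yields a word with no zeros (i.e. a leaf) equals `e^(-α) α^j`. -/
theorem expected_leaves (α : ℝ) (hα : 0 < α) (hα1 : α ≤ 1) (r j : ℕ) (hjr : j < r) :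
    ∑' n : ℕ, ∑ w : Fin n → Fin r, wordProb α r n * (leafCount r n j w : ℝ)
      = Real.exp (-α) * α ^ j := by
  have hstep : ∀ n : ℕ, ∑ w : Fin n → Fin r, wordProb α r n * (leafCount r n j w : ℝ)
      = wordProb α r n * ((n.choose j * (Nat.factorial j * (r - 1) ^ (n - j)) : ℕ) : ℝ) := by
    intro n
    rw [← Finset.mul_sum, ← Nat.cast_sum, sum_leafCount r n j hjr]
  rw [tsum_congr hstep]
  exact key_tsum α hα r j hjr
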